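/- Let Φ = Π.φ be a QCNF, C ∈ φ a clause, and l ∈ C an existential literal that is blocked in C; let x = vars(l) and let W = { k∈C : k≠l and there exists D∈φ with k̄,l̄∈D and k<l } be the set of witnesses for l being blocked. Let M′ be a model of Φ′ = Π.(φ∖{C}) with definition ψ′_x for x. Define ψ_x = ψ′_x ∨ M′(⋀_{k∈W} k̄) if l = x, and ψ_x = ψ′_x ∧ M′(⋁_{k∈W} k) if l = x̄; let M = (M′∖{ψ′_x}) ∪ {ψ_x}. Then M is a model of Φ. -/

import Mathlib

/-!
Framework for prenex QCNF: variables are natural numbers; a quantifier prefix is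
given by `ex : Var → Bool` (`ex v = true` iff variable `v` is existential), and
the prefix order on variables (hence on literals) is `<` on ℕ.
-/

abbrev Var := ℕ

/-- A literal: a variable together with a polarity (`pos = true` for `x`, `false` for `x̄`). -/
structure Lit where
  var : Var
  pos : Bool
deriving DecidableEq

/-- The complementary literal. -/
def Lit.neg (l : Lit) : Lit := ⟨l.var, !l.pos⟩

/-- Clauses (disjunctions) and terms (conjunctions) are finite sets of literals. -/
abbrev Clause := Finset Lit
abbrev Term := Finset Lit

/-- A set of literals contains no complementary pair. -/
def LitSetOk (C : Finset Lit) : Prop := ∀ l ∈ C, l.neg ∉ C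

instance (C : Finset Lit) : Decidable (LitSetOk C) :=
  inferInstanceAs (Decidable (∀ l ∈ C, l.neg ∉ C))

/-- The resOf on pivot literal `p` (used both for clauses and for terms). -/
def resOf (p : Lit) (A B : Finset Lit) : Finset Lit := A.erase p ∪ B.erase p.neg

/-- Resolution of `A` (containing `p`) with `B` (containing `p.neg`) is defined: the
union of the side literals contains no complementary pair and neither `p` nor `p.neg`. -/
def ResOk (p : Lit) (A B : Finset Lit) : Prop :=
  p ∈ A ∧ p.neg ∈ B ∧ p ∉ resOf p A B ∧ p.neg ∉ resOf p A B ∧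
    LitSetOk (resOf p A B)

instance (p : Lit) (A B : Finset Lit) : Decidable (ResOk p A B) :=
  inferInstanceAs (Decidable (p ∈ A ∧ p.neg ∈ B ∧ p ∉ resOf p A B ∧
    p.neg ∉ resOf p A B ∧ LitSetOk (resOf p A B)))

/-- ∀-reduction: `C'` results from `C` by removing every universal literal `l` such
that no existential literal `k ∈ C` satisfies `l < k`. -/
def IsForallReduct (ex : Var → Bool) (C C' : Clause) : Prop :=
  ∀ l : Lit, l ∈ C' ↔ l ∈ C ∧ (ex l.var = true ∨ ∃ k ∈ C, ex k.var = true ∧ l.var < k.var)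

/-- QU-resolution proofs of a clause from the matrix `φ` under the prefix `ex`:
every clause is in `φ`, or a QU-resOf of two earlier clauses (the pivot may be
universal), or results from an earlier clause by ∀-reduction. -/
inductive QUProof (ex : Var → Bool) (φ : Finset Clause) : Clause → Prop
  | ax {C : Clause} : C ∈ φ → QUProof ex φ C
  | res {A B : Clause} {p : Lit} : QUProof ex φ A → QUProof ex φ B → ResOk p A B →
      QUProof ex φ (resOf p A B)
  | red {C C' : Clause} : QUProof ex φ C → IsForallReduct ex C C' → QUProof ex φ C'

/-- ∃-reduction: `T'` results from `T` by removing every existential literal `l` such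
that no universal literal `k ∈ T` satisfies `l < k`. -/
def IsExistsReduct (ex : Var → Bool) (T T' : Term) : Prop :=
  ∀ l : Lit, l ∈ T' ↔ l ∈ T ∧ (ex l.var = false ∨ ∃ k ∈ T, ex k.var = false ∧ l.var < k.var)

/-- Model generation rule: `T` is generated from the matrix `φ` if every clause of `φ`
contains a literal belonging to `T`. -/
def ModelGen (φ : Finset Clause) (T : Term) : Prop := ∀ C ∈ φ, ∃ l ∈ C, l ∈ T

/-- `π` is a term-resolution proof of the term `T` from the QCNF with prefix `ex` and
matrix `φ`: a finite sequence of terms ending in `T`, each generated by model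
generation or obtained from earlier terms by ∃-reduction or term-resolution. -/
def IsTermResProof (ex : Var → Bool) (φ : Finset Clause) (π : List Term) (T : Term) : Prop :=
  π ≠ [] ∧ π.getLast? = some T ∧
    ∀ i : Fin π.length, LitSetOk (π.get i) ∧
      (ModelGen φ (π.get i) ∨
        (∃ j : Fin π.length, j < i ∧ IsExistsReduct ex (π.get j) (π.get i)) ∨
        (∃ j k : Fin π.length, j < i ∧ k < i ∧ ∃ p : Lit,
          ResOk p (π.get j) (π.get k) ∧ π.get i = resOf p (π.get j) (π.get k)))

/-- Value of a literal under a total assignment. -/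
def evalLit (σ : Var → Bool) (l : Lit) : Bool := if l.pos then σ l.var else !σ l.var

/-- A strategy assigns to each (existential) variable a Boolean function of the
universal assignment — the semantic counterpart of a propositional formula. -/
abbrev Strategy := Var → (Var → Bool) → Bool

/-- The total assignment induced by a strategy `M` and a universal assignment `τ`. -/
def Strategy.assign (ex : Var → Bool) (M : Strategy) (τ : Var → Bool) : Var → Bool :=
  fun v => if ex v then M v τ else τ v

/-- The definition of each existential variable depends only on the universal
variables preceding it in the prefix. -/
def WellFormed (ex : Var → Bool) (M : Strategy) : Prop :=
  ∀ e, ex e = true → ∀ τ τ' : Var → Bool,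
    (∀ u, ex u = false → u < e → τ u = τ' u) → M e τ = M e τ'

/-- `M` is a model of the QCNF with prefix `ex` and matrix `φ`: it is a well-formed
strategy and `M(φ)` is a tautology. -/
def IsModel (ex : Var → Bool) (φ : Finset Clause) (M : Strategy) : Prop :=
  WellFormed ex M ∧
    ∀ τ : Var → Bool, ∀ C ∈ φ, ∃ l ∈ C, evalLit (Strategy.assign ex M τ) l = true

/-- A term `T` agrees with an assignment `τ` to the universal variables iff there is
no (universal) literal `l` with `l̄ ∈ T` and `τ(l) = 1`. -/
def Agrees (ex : Var → Bool) (τ : Var → Bool) (T : Term) : Prop :=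
  ¬∃ l : Lit, ex l.var = false ∧ l.neg ∈ T ∧ evalLit τ l = true

/-- Edge `a → b` of the binary implication graph of `φ`: the binary clause
`a.neg ∨ b` is in `φ` (a clause `l₁ ∨ l₂` yields the edges `l̄₁ → l₂`, `l̄₂ → l₁`). -/
def ImpEdge (φ : Finset Clause) (a b : Lit) : Prop :=
  a ≠ b ∧ a.neg ≠ b ∧ ({a.neg, b} : Clause) ∈ φ

/-- The existential literal `l` of the clause `C` is blocked in the matrix `φ`. -/
def BlockedIn (ex : Var → Bool) (φ : Finset Clause) (C : Clause) (l : Lit) : Prop :=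
  ex l.var = true ∧ l ∈ C ∧ ∀ D ∈ φ, l.neg ∈ D → ∃ k ∈ C, k.var < l.var ∧ k.neg ∈ D

/-- One step of blocked clause elimination: remove one blocked clause. -/
def BCEStep (ex : Var → Bool) (φ φ' : Finset Clause) : Prop :=
  ∃ C ∈ φ, (∃ l, BlockedIn ex φ C l) ∧ φ' = φ.erase C

/-- The side-condition for eliminating the existential variable `x` from the matrix `φ`. -/
def VEside (x : Var) (φ : Finset Clause) : Prop :=
  ∀ C ∈ φ, (⟨x, true⟩ : Lit) ∈ C → (∃ k ∈ C, x < k.var) →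
    ∀ D ∈ φ, (⟨x, false⟩ : Lit) ∈ D → ∃ z ∈ C, z.var < x ∧ z.neg ∈ D

/-- The set of all defined resolvents on `x` between the clauses of `φ` containing the
literal `x` and those containing `x̄`. -/
def VEresolvents (x : Var) (φ : Finset Clause) : Finset Clause :=
  ((φ ×ˢ φ).filter fun q => ResOk ⟨x, true⟩ q.1 q.2).image
    fun q => resOf ⟨x, true⟩ q.1 q.2

/-- Variable elimination of `x`: replace all clauses mentioning `x` by all defined
resolvents on `x`. -/
def VEapply (x : Var) (φ : Finset Clause) : Finset Clause :=
  φ.filter (fun C => (⟨x, true⟩ : Lit) ∉ C ∧ (⟨x, false⟩ : Lit) ∉ C) ∪ VEresolvents x φ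

/-- The variables of Φₙ (0-indexed): `uᵢ` is variable `2*i`, `eᵢ` is variable `2*i+1`,
so the prefix `∀u₀∃e₀…∀u_{n-1}∃e_{n-1}` is the natural order. -/
def uLit (i : ℕ) (b : Bool) : Lit := ⟨2 * i, b⟩
def eLit (i : ℕ) (b : Bool) : Lit := ⟨2 * i + 1, b⟩

/-- The prefix of Φₙ: even variables universal, odd variables existential. -/
def phiEx : Var → Bool := fun v => v % 2 == 1

/-- The clause `ūᵢ ∨ eᵢ`. -/
def posClause (i : ℕ) : Clause := {uLit i false, eLit i true}
/-- The clause `uᵢ ∨ ēᵢ`. -/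
def negClause (i : ℕ) : Clause := {uLit i true, eLit i false}

/-- The matrix of Φₙ: `⋀_{i<n} (ūᵢ ∨ eᵢ) ∧ (uᵢ ∨ ēᵢ)`. -/
def PhiMatrix (n : ℕ) : Finset Clause :=
  (Finset.range n).biUnion fun i => {posClause i, negClause i}

/-- The set `W` of witnesses for the literal `l` being blocked in the clause `C`. -/
def witnesses (φ : Finset Clause) (C : Clause) (l : Lit) : Finset Lit :=
  C.filter fun k => k ≠ l ∧ k.var < l.var ∧ ∃ D ∈ φ, k.neg ∈ D ∧ l.neg ∈ D

/-- `φ` with all literals not less than `x` deleted from each clause. -/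
def restrictBelow (x : Var) (φ : Finset Clause) : Finset Clause :=
  φ.image fun C => C.filter fun l => l.var < x


lemma evalLit_neg (σ : Var → Bool) (k : Lit) : evalLit σ k.neg = !evalLit σ k := by
  rcases k with ⟨v, b⟩; cases b <;> simp [evalLit, Lit.neg]

lemma evalLit_congr (σ σ' : Var → Bool) (k : Lit) (h : σ k.var = σ' k.var) :
    evalLit σ k = evalLit σ' k := by
  simp [evalLit, h]

theorem stmt11 (ex : Var → Bool) (φ : Finset Clause) (hok : ∀ E ∈ φ, LitSetOk E)
    (C : Clause) (hC : C ∈ φ) (l : Lit) (hl : l ∈ C) (hex : ex l.var = true)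
    (hblocked : ∀ D ∈ φ, l.neg ∈ D → ∃ k ∈ C, k.var < l.var ∧ k.neg ∈ D)
    (M' : Strategy) (hM' : IsModel ex (φ.erase C) M') :
    IsModel ex φ
      (Function.update M' l.var fun τ =>
        if l.pos then
          M' l.var τ ||
            decide (∀ k ∈ witnesses φ C l, evalLit (Strategy.assign ex M' τ) k.neg = true)
        else
          M' l.var τ &&
            decide (∃ k ∈ witnesses φ C l, evalLit (Strategy.assign ex M' τ) k = true)) := by

  classical
  obtain ⟨hWF, hsat⟩ := hM'
  set f : (Var → Bool) → Bool := fun τ =>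
      if l.pos then
        M' l.var τ ||
          decide (∀ k ∈ witnesses φ C l, evalLit (Strategy.assign ex M' τ) k.neg = true)
      else
        M' l.var τ &&
          decide (∃ k ∈ witnesses φ C l, evalLit (Strategy.assign ex M' τ) k = true)
    with hfdef
  have hwit : ∀ k ∈ witnesses φ C l, k ∈ C ∧ k.var < l.var := by
    intro k hk
    rw [witnesses, Finset.mem_filter] at hk
    exact ⟨hk.1, hk.2.2.1⟩
  have hassign_lt : ∀ (τ τ' : Var → Bool), (∀ u, ex u = false → u < l.var → τ u = τ' u) →
      ∀ v, v < l.var → Strategy.assign ex M' τ v = Strategy.assign ex M' τ' v := by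
    intro τ τ' hag v hv
    unfold Strategy.assign
    by_cases hev : ex v = true
    · simp only [hev, if_true]
      exact hWF v hev τ τ' (fun u hu hlt => hag u hu (hlt.trans hv))
    · have hev' : ex v = false := by simpa using hev
      simp only [hev', Bool.false_eq_true, if_false]
      exact hag v hev' hv
  constructor
  · -- well-formedness
    intro e he τ τ' hag
    by_cases hexeq : e = l.var
    · subst hexeq
      have h1 : M' l.var τ = M' l.var τ' := hWF l.var he τ τ' hag
      have hEv : ∀ k : Lit, k.var < l.var →
          evalLit (Strategy.assign ex M' τ) k = evalLit (Strategy.assign ex M' τ') k := by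
        intro k hk
        exact evalLit_congr _ _ _ (hassign_lt τ τ' hag k.var hk)
      have h2 : decide (∀ k ∈ witnesses φ C l,
            evalLit (Strategy.assign ex M' τ) k.neg = true)
          = decide (∀ k ∈ witnesses φ C l,
            evalLit (Strategy.assign ex M' τ') k.neg = true) := by
        apply decide_eq_decide.mpr
        constructor <;> intro h k hk
        · rw [← hEv k.neg (hwit k hk).2]; exact h k hk
        · rw [hEv k.neg (hwit k hk).2]; exact h k hk
      have h3 : decide (∃ k ∈ witnesses φ C l,
            evalLit (Strategy.assign ex M' τ) k = true)
          = decide (∃ k ∈ witnesses φ C l,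
            evalLit (Strategy.assign ex M' τ') k = true) := by
        apply decide_eq_decide.mpr
        constructor <;> rintro ⟨k, hk, hkt⟩ <;> refine ⟨k, hk, ?_⟩
        · rw [← hEv k (hwit k hk).2]; exact hkt
        · rw [hEv k (hwit k hk).2]; exact hkt
      cases hp : l.pos <;>
        simp only [Function.update_self, hfdef, hp, if_true, if_false, Bool.false_eq_true,
          h1, h2, h3]
    · rw [Function.update_of_ne hexeq]
      exact hWF e he τ τ' hag
  · -- satisfaction
    intro τ D hD
    set σ := Strategy.assign ex (Function.update M' l.var f) τ with hσdef
    set σ' := Strategy.assign ex M' τ with hσ'def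
    have hσ : ∀ v, v ≠ l.var → σ v = σ' v := by
      intro v hv
      simp [hσdef, hσ'def, Strategy.assign, Function.update_of_ne hv]
    have hσx : σ l.var = f τ := by
      simp [hσdef, Strategy.assign, hex]
    have hσ'x : σ' l.var = M' l.var τ := by
      simp [hσ'def, Strategy.assign, hex]
    have hEvNe : ∀ k : Lit, k.var ≠ l.var → evalLit σ k = evalLit σ' k := by
      intro k hk; exact evalLit_congr _ _ _ (hσ _ hk)
    by_cases hDC : D = C
    · subst hDC
      by_cases hlt : evalLit σ l = true
      · exact ⟨l, hl, hlt⟩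
      · cases hp : l.pos
        · -- l.pos = false : σ l.var = true, f τ = M' && decide Q, so decide Q = true
          have hσxt : σ l.var = true := by
            have := hlt
            simp [evalLit, hp] at this
            exact this
          have hQ : decide (∃ k ∈ witnesses φ D l,
              evalLit σ' k = true) = true := by
            have hft : f τ = true := hσx ▸ hσxt
            rw [hfdef] at hft
            simp only [hp, Bool.false_eq_true, if_false, Bool.and_eq_true] at hft
            exact hft.2
          obtain ⟨k, hkW, hkt⟩ := of_decide_eq_true hQ
          refine ⟨k, (hwit k hkW).1, ?_⟩
          rw [hEvNe k (Nat.ne_of_lt (hwit k hkW).2)]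
          exact hkt
        · -- l.pos = true : σ l.var = false, so decide P = false
          have hσxf : σ l.var = false := by
            have := hlt
            simp [evalLit, hp] at this
            exact this
          have hP : ¬ (∀ k ∈ witnesses φ D l, evalLit σ' k.neg = true) := by
            have hff : f τ = false := hσx ▸ hσxf
            rw [hfdef] at hff
            simp only [hp, if_true, Bool.or_eq_false_iff] at hff
            exact of_decide_eq_false hff.2
          push_neg at hP
          obtain ⟨k, hkW, hkt⟩ := hP
          have hkt' : evalLit σ' k = true := by
            rw [evalLit_neg] at hkt
            simpa using hkt
          refine ⟨k, (hwit k hkW).1, ?_⟩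
          rw [hEvNe k (Nat.ne_of_lt (hwit k hkW).2)]
          exact hkt'
    · have hD' : D ∈ φ.erase C := Finset.mem_erase.mpr ⟨hDC, hD⟩
      obtain ⟨m, hm, hmev⟩ := hsat τ D hD'
      by_cases hmx : m.var = l.var
      · by_cases hmp : m.pos = l.pos
        · have hml : m = l := by
            rcases m with ⟨mv, mp⟩; rcases l with ⟨lv, lp⟩
            simp_all
          subst hml
          refine ⟨m, hm, ?_⟩
          -- evalLit σ' m = true → evalLit σ m = true
          cases hp : m.pos
          · -- neg: σ' x = false, M' x τ = false, f τ = false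
            have h1 : σ' m.var = false := by
              have := hmev; simp [evalLit, hp] at this; exact this
            have h2 : M' m.var τ = false := hσ'x ▸ h1
            have hft : f τ = false := by
              rw [hfdef]; simp [hp, h2]
            simp [evalLit, hp, hσx, hft]
          · have h1 : σ' m.var = true := by
              have := hmev; simp [evalLit, hp] at this; exact this
            have h2 : M' m.var τ = true := hσ'x ▸ h1
            have hft : f τ = true := by
              rw [hfdef]; simp [hp, h2]
            simp [evalLit, hp, hσx, hft]
        · have hml : m = l.neg := by
            rcases m with ⟨mv, mp⟩; rcases l with ⟨lv, lp⟩
            simp [Lit.neg] at hmx hmp ⊢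
            cases mp <;> cases lp <;> simp_all
          subst hml
          by_cases h2 : evalLit σ l.neg = true
          · exact ⟨l.neg, hm, h2⟩
          · -- evalLit σ l = true
            obtain ⟨k, hkC, hkvar, hkD⟩ := hblocked D hD hm
            have hkW : k ∈ witnesses φ C l := by
              rw [witnesses, Finset.mem_filter]
              exact ⟨hkC, fun h => absurd (h ▸ hkvar) (lt_irrefl l.var), hkvar,
                ⟨D, hD, hkD, hm⟩⟩
            have hkx : k.var ≠ l.var := Nat.ne_of_lt hkvar
            refine ⟨k.neg, hkD, ?_⟩
            have hknx : (k.neg).var ≠ l.var := hkx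
            rw [hEvNe k.neg hknx, evalLit_neg]
            cases hp : l.pos
            · -- l.pos = false : l.neg.pos = true
              have hσx1 : σ l.var = false := by
                have := h2
                simp [evalLit, Lit.neg, hp] at this
                exact this
              have hσ'x1 : σ' l.var = true := by
                have := hmev
                simp [evalLit, Lit.neg, hp] at this
                exact this
              have hM : M' l.var τ = true := hσ'x ▸ hσ'x1
              have hft : f τ = false := hσx ▸ hσx1
              rw [hfdef] at hft
              simp only [hp, Bool.false_eq_true, if_false, hM, Bool.true_and] at hft
              have hnQ : ¬ ∃ k ∈ witnesses φ C l, evalLit σ' k = true :=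
                of_decide_eq_false hft
              push_neg at hnQ
              have := hnQ k hkW
              simp [Bool.not_eq_true] at this ⊢
              simp [this]
            · -- l.pos = true : l.neg.pos = false
              have hσx1 : σ l.var = true := by
                have := h2
                simp [evalLit, Lit.neg, hp] at this
                exact this
              have hσ'x1 : σ' l.var = false := by
                have := hmev
                simp [evalLit, Lit.neg, hp] at this
                exact this
              have hM : M' l.var τ = false := hσ'x ▸ hσ'x1
              have hft : f τ = true := hσx ▸ hσx1
              rw [hfdef] at hft
              simp only [hp, if_true, hM, Bool.false_or] at hft
              have hQ := of_decide_eq_true hft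
              have := hQ k hkW
              rw [evalLit_neg] at this
              simp [Bool.not_eq_true] at this ⊢
              revert this; cases evalLit σ' k <;> simp
      · exact ⟨m, hm, (hEvNe m hmx) ▸ hmev⟩
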